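/- arXiv:2104.13505 — 10 statements merged into one kernel-verified Lean document; each statement's English description precedes it below -/
import Mathlib

section
/- For all positive integers k and N with k ≤ N, f(k,N) ≤ 2k(⌊N/k⌋ − 1) + 1. -/
open Finset

/-- The elements of `S` on the `A` side (left side). -/
def sideA {N : ℕ} (S : Finset (Fin N ⊕ Fin N)) : Finset (Fin N ⊕ Fin N) :=
  S.filter (fun x => x.isLeft)

/-- The elements of `S` on the `B` side (right side). -/
def sideB {N : ℕ} (S : Finset (Fin N ⊕ Fin N)) : Finset (Fin N ⊕ Fin N) :=
  S.filter (fun x => x.isRight)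

/-- A family of subsets of `A ∪ B` is semiintersecting if every member meets each side in
exactly `k` elements, and any two distinct members are disjoint in exactly one of the sides. -/
def Semiintersecting (k N : ℕ) (F : Finset (Finset (Fin N ⊕ Fin N))) : Prop :=
  (∀ S ∈ F, (sideA S).card = k ∧ (sideB S).card = k) ∧
  (∀ S ∈ F, ∀ T ∈ F, S ≠ T →
      ((sideA S ∩ sideA T = ∅) ↔ (sideB S ∩ sideB T ≠ ∅)))

/-- `f k N`: the maximum cardinality of a semiintersecting family with parameters `k`, `N`. -/
noncomputable def semiMax (k N : ℕ) : ℕ :=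
  sSup {n | ∃ F : Finset (Finset (Fin N ⊕ Fin N)), Semiintersecting k N F ∧ F.card = n}
lemma card_side_eq {N : ℕ} (S : Finset (Fin N ⊕ Fin N)) :
    S.card = (sideA S).card + (sideB S).card := by
  unfold sideA sideB
  rw [← Finset.card_filter_add_card_filter_not (p := fun x => x.isLeft = true)]
  congr 1
  have : S.filter (fun a => ¬ a.isLeft = true) = S.filter (fun x => x.isRight = true) := by
    apply Finset.filter_congr; intro x _; cases x <;> simp
  rw [this]

lemma right_univ_card {N : ℕ} :
    ((Finset.univ : Finset (Fin N ⊕ Fin N)).filter (fun x => x.isRight = true)).card = N := by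
  have : (Finset.univ : Finset (Fin N ⊕ Fin N)).filter (fun x => x.isRight = true)
      = Finset.univ.map ⟨Sum.inr, Sum.inr_injective⟩ := by
    ext x; cases x <;> simp
  rw [this, Finset.card_map, Finset.card_univ, Fintype.card_fin]

lemma left_univ_card {N : ℕ} :
    ((Finset.univ : Finset (Fin N ⊕ Fin N)).filter (fun x => x.isLeft = true)).card = N := by
  have : (Finset.univ : Finset (Fin N ⊕ Fin N)).filter (fun x => x.isLeft = true)
      = Finset.univ.map ⟨Sum.inl, Sum.inl_injective⟩ := by
    ext x; cases x <;> simp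
  rw [this, Finset.card_map, Finset.card_univ, Fintype.card_fin]

lemma deg_le {k N : ℕ} (hk : 0 < k) {F : Finset (Finset (Fin N ⊕ Fin N))}
    (hF : Semiintersecting k N F) (x : Fin N ⊕ Fin N) :
    (F.filter (fun S => x ∈ S)).card ≤ N / k := by
  set G := F.filter (fun S => x ∈ S) with hG
  rw [Nat.le_div_iff_mul_le hk]
  cases x with
  | inl a =>
    have hdisj : ∀ S ∈ G, ∀ T ∈ G, S ≠ T → Disjoint (sideB S) (sideB T) := by
      intro S hS T hT hne
      simp only [hG, Finset.mem_filter] at hS hT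
      have hiff := hF.2 S hS.1 T hT.1 hne
      have hA : sideA S ∩ sideA T ≠ ∅ := by
        intro h
        have : Sum.inl a ∈ sideA S ∩ sideA T := by
          simp [sideA, Finset.mem_inter, hS.2, hT.2]
        rw [h] at this; exact absurd this (Finset.notMem_empty _)
      have hB : sideB S ∩ sideB T = ∅ := by
        by_contra hB; exact hA (hiff.mpr hB)
      exact Finset.disjoint_iff_inter_eq_empty.mpr hB
    calc G.card * k = ∑ S ∈ G, (sideB S).card := by
            rw [Finset.sum_congr rfl (fun S hS => ((hF.1 S (Finset.mem_filter.mp hS).1).2))]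
            simp [Finset.sum_const, Nat.mul_comm]
            exact Or.inl rfl
      _ = (G.biUnion sideB).card := (Finset.card_biUnion hdisj).symm
      _ ≤ ((Finset.univ : Finset (Fin N ⊕ Fin N)).filter (fun x => x.isRight = true)).card := by
            apply Finset.card_le_card
            intro y hy
            simp only [Finset.mem_biUnion] at hy
            obtain ⟨S, _, hyS⟩ := hy
            simp only [sideB, Finset.mem_filter] at hyS
            simp [hyS.2]
      _ = N := right_univ_card
  | inr b =>
    have hdisj : ∀ S ∈ G, ∀ T ∈ G, S ≠ T → Disjoint (sideA S) (sideA T) := by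
      intro S hS T hT hne
      simp only [hG, Finset.mem_filter] at hS hT
      have hiff := hF.2 S hS.1 T hT.1 hne
      have hB : sideB S ∩ sideB T ≠ ∅ := by
        intro h
        have : Sum.inr b ∈ sideB S ∩ sideB T := by
          simp [sideB, Finset.mem_inter, hS.2, hT.2]
        rw [h] at this; exact absurd this (Finset.notMem_empty _)
      have hA : sideA S ∩ sideA T = ∅ := hiff.mpr hB
      exact Finset.disjoint_iff_inter_eq_empty.mpr hA
    calc G.card * k = ∑ S ∈ G, (sideA S).card := by
            rw [Finset.sum_congr rfl (fun S hS => ((hF.1 S (Finset.mem_filter.mp hS).1).1))]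
            simp [Finset.sum_const, Nat.mul_comm]
            exact Or.inl rfl
      _ = (G.biUnion sideA).card := (Finset.card_biUnion hdisj).symm
      _ ≤ ((Finset.univ : Finset (Fin N ⊕ Fin N)).filter (fun x => x.isLeft = true)).card := by
            apply Finset.card_le_card
            intro y hy
            simp only [Finset.mem_biUnion] at hy
            obtain ⟨S, _, hyS⟩ := hy
            simp only [sideA, Finset.mem_filter] at hyS
            simp [hyS.2]
      _ = N := left_univ_card

lemma family_card_le {k N : ℕ} (hk : 0 < k) (hkN : k ≤ N)
    {F : Finset (Finset (Fin N ⊕ Fin N))} (hF : Semiintersecting k N F) :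
    F.card ≤ 2 * k * (N / k - 1) + 1 := by
  rcases F.eq_empty_or_nonempty with rfl | ⟨S₀, hS₀⟩
  · simp
  have hcard0 : S₀.card = 2 * k := by
    rw [card_side_eq, (hF.1 S₀ hS₀).1, (hF.1 S₀ hS₀).2]; ring
  have hsub : F.erase S₀ ⊆ S₀.biUnion (fun x => (F.erase S₀).filter (fun T => x ∈ T)) := by
    intro T hT
    have hTne : T ≠ S₀ := Finset.ne_of_mem_erase hT
    have hTF : T ∈ F := Finset.mem_of_mem_erase hT
    have hiff := hF.2 S₀ hS₀ T hTF (Ne.symm hTne)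
    have : ∃ x, x ∈ S₀ ∧ x ∈ T := by
      by_cases hA : sideA S₀ ∩ sideA T = ∅
      · obtain ⟨y, hy⟩ := Finset.nonempty_iff_ne_empty.mpr (hiff.mp hA)
        simp only [sideB, Finset.mem_inter, Finset.mem_filter] at hy
        exact ⟨y, hy.1.1, hy.2.1⟩
      · obtain ⟨y, hy⟩ := Finset.nonempty_iff_ne_empty.mpr hA
        simp only [sideA, Finset.mem_inter, Finset.mem_filter] at hy
        exact ⟨y, hy.1.1, hy.2.1⟩
    obtain ⟨x, hx, hxT⟩ := this
    exact Finset.mem_biUnion.mpr ⟨x, hx, Finset.mem_filter.mpr ⟨hT, hxT⟩⟩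
  have hstep : ∀ x ∈ S₀, ((F.erase S₀).filter (fun T => x ∈ T)).card ≤ N / k - 1 := by
    intro x hx
    have hsub2 : (F.erase S₀).filter (fun T => x ∈ T)
        ⊆ (F.filter (fun T => x ∈ T)).erase S₀ := by
      intro T hT
      simp only [Finset.mem_filter, Finset.mem_erase] at hT ⊢
      exact ⟨hT.1.1, hT.1.2, hT.2⟩
    have hmem : S₀ ∈ F.filter (fun T => x ∈ T) := Finset.mem_filter.mpr ⟨hS₀, hx⟩
    calc ((F.erase S₀).filter (fun T => x ∈ T)).card
        ≤ ((F.filter (fun T => x ∈ T)).erase S₀).card := Finset.card_le_card hsub2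
      _ = (F.filter (fun T => x ∈ T)).card - 1 := Finset.card_erase_of_mem hmem
      _ ≤ N / k - 1 := Nat.sub_le_sub_right (deg_le hk hF x) 1
  have h1 : (F.erase S₀).card ≤ 2 * k * (N / k - 1) := by
    calc (F.erase S₀).card
        ≤ (S₀.biUnion (fun x => (F.erase S₀).filter (fun T => x ∈ T))).card :=
          Finset.card_le_card hsub
      _ ≤ ∑ x ∈ S₀, ((F.erase S₀).filter (fun T => x ∈ T)).card := Finset.card_biUnion_le
      _ ≤ ∑ _x ∈ S₀, (N / k - 1) := Finset.sum_le_sum hstep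
      _ = 2 * k * (N / k - 1) := by rw [Finset.sum_const, hcard0, smul_eq_mul]
  have := Finset.card_erase_add_one hS₀
  omega

theorem semiMax_le (k N : ℕ) (hk : 0 < k) (hkN : k ≤ N) :
    semiMax k N ≤ 2 * k * (N / k - 1) + 1 := by
  apply csSup_le
  · exact ⟨0, ∅, ⟨fun S h => absurd h (Finset.notMem_empty S),
      fun S h => absurd h (Finset.notMem_empty S)⟩, Finset.card_empty⟩
  · rintro n ⟨F, hF, rfl⟩
    exact family_card_le hk hkN hF
end

section
/- For all positive integers k and N with k ≤ N, f(k,N) ≤ ⌊N⌊N/k⌋/k⌋. -/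
open Finset

lemma mem_sideA {N : ℕ} {S : Finset (Fin N ⊕ Fin N)} {x : Fin N ⊕ Fin N} :
    x ∈ sideA S ↔ x ∈ S ∧ x.isLeft := by simp [sideA]

lemma mem_sideB {N : ℕ} {S : Finset (Fin N ⊕ Fin N)} {x : Fin N ⊕ Fin N} :
    x ∈ sideB S ↔ x ∈ S ∧ x.isRight := by simp [sideB]

lemma card_left_univ (N : ℕ) :
    ((univ : Finset (Fin N ⊕ Fin N)).filter (fun x => x.isLeft)).card = N := by
  have : (univ : Finset (Fin N ⊕ Fin N)).filter (fun x => x.isLeft)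
      = (univ : Finset (Fin N)).map ⟨Sum.inl, Sum.inl_injective⟩ := by
    ext x; cases x <;> simp
  rw [this, card_map, card_univ, Fintype.card_fin]

lemma card_right_univ (N : ℕ) :
    ((univ : Finset (Fin N ⊕ Fin N)).filter (fun x => x.isRight)).card = N := by
  have : (univ : Finset (Fin N ⊕ Fin N)).filter (fun x => x.isRight)
      = (univ : Finset (Fin N)).map ⟨Sum.inr, Sum.inr_injective⟩ := by
    ext x; cases x <;> simp
  rw [this, card_map, card_univ, Fintype.card_fin]

lemma semi_card_le (k N : ℕ) (hk : 0 < k) (F : Finset (Finset (Fin N ⊕ Fin N)))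
    (hF : Semiintersecting k N F) : F.card * k ≤ N * (N / k) := by
  -- for each point x, the members whose B-side contains x number at most N / k
  have hpt : ∀ x : Fin N ⊕ Fin N,
      (F.filter (fun S => x ∈ sideB S)).card ≤ N / k := by
    intro x
    rw [Nat.le_div_iff_mul_le hk]
    set F' := F.filter (fun S => x ∈ sideB S) with hF'def
    have hdisj : ∀ S ∈ F', ∀ T ∈ F', S ≠ T → Disjoint (sideA S) (sideA T) := by
      intro S hS T hT hne
      rw [Finset.disjoint_iff_inter_eq_empty]
      simp only [hF'def, mem_filter] at hS hT
      refine (hF.2 S hS.1 T hT.1 hne).mpr ?_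
      intro hempty
      have : x ∈ sideB S ∩ sideB T := mem_inter.mpr ⟨hS.2, hT.2⟩
      rw [hempty] at this
      exact absurd this (notMem_empty x)
    have hcard : F'.card * k = (F'.biUnion sideA).card := by
      rw [Finset.card_biUnion hdisj]
      rw [Finset.sum_congr rfl (fun S hS => (hF.1 S (mem_filter.mp hS).1).1)]
      rw [sum_const, smul_eq_mul]
    rw [hcard]
    calc (F'.biUnion sideA).card
        ≤ ((univ : Finset (Fin N ⊕ Fin N)).filter (fun x => x.isLeft)).card := by
          apply card_le_card
          intro y hy
          rcases mem_biUnion.mp hy with ⟨S, _, hyS⟩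
          simp [mem_sideA.mp hyS]
      _ = N := card_left_univ N
  -- double counting
  have hcount : F.card * k = ∑ x : Fin N ⊕ Fin N,
      (F.filter (fun S => x ∈ sideB S)).card := by
    calc F.card * k = ∑ S ∈ F, (sideB S).card := by
          rw [Finset.sum_congr rfl (fun S hS => (hF.1 S hS).2), sum_const, smul_eq_mul]
      _ = ∑ S ∈ F, ∑ x : Fin N ⊕ Fin N, if x ∈ sideB S then 1 else 0 := by
          refine Finset.sum_congr rfl (fun S _ => ?_)
          rw [← Finset.card_filter]
          congr 1
          ext y
          simp
      _ = ∑ x : Fin N ⊕ Fin N, ∑ S ∈ F, if x ∈ sideB S then 1 else 0 :=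
          Finset.sum_comm
      _ = ∑ x : Fin N ⊕ Fin N, (F.filter (fun S => x ∈ sideB S)).card := by
          refine Finset.sum_congr rfl (fun x _ => ?_)
          rw [Finset.card_filter]
  rw [hcount]
  rw [← Finset.sum_filter_add_sum_filter_not univ (fun x : Fin N ⊕ Fin N => x.isRight)]
  have hz : ∑ x ∈ univ.filter (fun x : Fin N ⊕ Fin N => ¬ x.isRight),
      (F.filter (fun S => x ∈ sideB S)).card = 0 := by
    apply Finset.sum_eq_zero
    intro x hx
    simp only [mem_filter] at hx
    rw [Finset.card_eq_zero, Finset.filter_eq_empty_iff]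
    intro S _
    rw [mem_sideB]
    tauto
  rw [hz, add_zero]
  calc ∑ x ∈ univ.filter (fun x : Fin N ⊕ Fin N => x.isRight),
        (F.filter (fun S => x ∈ sideB S)).card
      ≤ ∑ _x ∈ univ.filter (fun x : Fin N ⊕ Fin N => x.isRight), (N / k) :=
        Finset.sum_le_sum (fun x _ => hpt x)
    _ = N * (N / k) := by rw [sum_const, smul_eq_mul, card_right_univ]

theorem semiMax_le_double_counting (k N : ℕ) (hk : 0 < k) (hkN : k ≤ N) :
    semiMax k N ≤ N * (N / k) / k := by
  apply csSup_le'
  rintro n ⟨F, hF, rfl⟩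
  rw [Nat.le_div_iff_mul_le hk]
  exact semi_card_le k N hk F hF
end

section
/- Let S be a semiintersecting family and let C ⊂ A with 1 ≤ |C| ≤ k−1. If S₁,…,S_{2k+1} ∈ S are sets such that the intersection of any two of them equals C, then every other member of S intersects C. -/
open Finset

theorem catcher_lemma (k N : ℕ) (hk : 0 < k) (F : Finset (Finset (Fin N ⊕ Fin N)))
    (hF : Semiintersecting k N F) (C : Finset (Fin N ⊕ Fin N))
    (hCA : ∀ x ∈ C, x.isLeft) (hC1 : 1 ≤ C.card) (hC2 : C.card ≤ k - 1)
    (T : Fin (2 * k + 1) → Finset (Fin N ⊕ Fin N)) (hTinj : Function.Injective T)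
    (hTF : ∀ i, T i ∈ F) (hTC : ∀ i j, i ≠ j → T i ∩ T j = C) :
    ∀ S ∈ F, (∀ i, S ≠ T i) → (S ∩ C).Nonempty := by
  intro S hS hST
  by_contra hempty
  rw [Finset.not_nonempty_iff_eq_empty] at hempty
  obtain ⟨hcard, hint⟩ := hF
  obtain ⟨x₀, hx₀⟩ := Finset.card_pos.mp hC1
  classical
  -- picking functions
  set f : Fin (2 * k + 1) → (Fin N ⊕ Fin N) := fun i =>
    if h : (sideB S ∩ sideB (T i)).Nonempty then h.choose else x₀ with hf
  set g : Fin (2 * k + 1) → (Fin N ⊕ Fin N) := fun i =>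
    if h : (sideA S ∩ sideA (T i)).Nonempty then h.choose else x₀ with hg
  set I₁ : Finset (Fin (2 * k + 1)) :=
    Finset.univ.filter (fun i => (sideB S ∩ sideB (T i)).Nonempty) with hI₁
  set I₂ : Finset (Fin (2 * k + 1)) :=
    Finset.univ.filter (fun i => ¬ (sideB S ∩ sideB (T i)).Nonempty) with hI₂
  have hfmem : ∀ i ∈ I₁, f i ∈ sideB S ∩ sideB (T i) := by
    intro i hi
    rw [hI₁, Finset.mem_filter] at hi
    simp only [hf, dif_pos hi.2]
    exact hi.2.choose_spec
  have hgA : ∀ i ∈ I₂, (sideA S ∩ sideA (T i)).Nonempty := by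
    intro i hi
    rw [hI₂, Finset.mem_filter] at hi
    have := hint S hS (T i) (hTF i) (hST i)
    by_contra hA
    rw [Finset.not_nonempty_iff_eq_empty] at hA
    exact hi.2 (Finset.nonempty_iff_ne_empty.mpr (this.mp hA))
  have hgmem : ∀ i ∈ I₂, g i ∈ sideA S ∩ sideA (T i) := by
    intro i hi
    have h := hgA i hi
    simp only [hg, dif_pos h]
    exact h.choose_spec
  have hsub : ∀ (X : Finset (Fin N ⊕ Fin N)), sideA X ⊆ X := fun X => Finset.filter_subset _ _
  have hsubB : ∀ (X : Finset (Fin N ⊕ Fin N)), sideB X ⊆ X := fun X => Finset.filter_subset _ _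
  have h1' : I₁.card ≤ k := by
    have hc := Finset.card_le_card_of_injOn f
      (fun i hi => (Finset.mem_inter.mp (hfmem i hi)).1)
      (by
        intro i hi j hj hij
        by_contra hne
        have h1 := Finset.mem_inter.mp (hfmem i hi)
        have h2 := Finset.mem_inter.mp (hfmem j hj)
        have : f i ∈ T i ∩ T j := Finset.mem_inter.mpr
          ⟨hsubB _ h1.2, hsubB _ (hij ▸ h2.2)⟩
        rw [hTC i j hne] at this
        have hl := hCA _ this
        have hr : (f i).isRight := (Finset.mem_filter.mp h1.2).2
        exact absurd hl (Sum.not_isLeft.mpr hr))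
    rw [(hcard S hS).2] at hc
    exact hc
  have h2 : I₂.card ≤ k := by
    have hc := Finset.card_le_card_of_injOn g
      (fun i hi => (Finset.mem_inter.mp (hgmem i hi)).1)
      (by
        intro i hi j hj hij
        by_contra hne
        have h1 := Finset.mem_inter.mp (hgmem i hi)
        have h2 := Finset.mem_inter.mp (hgmem j hj)
        have hmem : g i ∈ T i ∩ T j := Finset.mem_inter.mpr
          ⟨hsub _ h1.2, hsub _ (hij ▸ h2.2)⟩
        rw [hTC i j hne] at hmem
        have : g i ∈ S ∩ C := Finset.mem_inter.mpr ⟨hsub _ h1.1, hmem⟩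
        rw [hempty] at this
        exact absurd this (Finset.notMem_empty _))
    rw [(hcard S hS).1] at hc
    exact hc
  have hsum : I₁.card + I₂.card = 2 * k + 1 := by
    rw [hI₁, hI₂]
    rw [Finset.card_filter_add_card_filter_not]
    simp
  omega
end

section
/- Let S be a semiintersecting family with parameters (k,N) on A∪B, and let g : A∪B → ℤ⁺ be such that there exist constants N', k' with Σ_{a∈A} g(a) = Σ_{b∈B} g(b) = N' and Σ_{s∈S∩A} g(s) = Σ_{s∈S∩B} g(s) = k' for all S ∈ S. Then f(k',N') ≥ |S|. -/
open Finset

/-- Given weights summing to `N'`, there is a map `Fin N' → Fin N` with prescribed fiber sizes. -/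
lemma exists_fiber_card {N N' : ℕ} (w : Fin N → ℕ) (hw : ∑ a, w a = N') :
    ∃ p : Fin N' → Fin N, ∀ a, (univ.filter (fun v => p v = a)).card = w a := by
  have hcard : Fintype.card (Σ a : Fin N, Fin (w a)) = Fintype.card (Fin N') := by
    simp [Fintype.card_sigma, hw]
  let e : (Σ a : Fin N, Fin (w a)) ≃ Fin N' := Fintype.equivOfCardEq hcard
  refine ⟨fun v => (e.symm v).1, fun a => ?_⟩
  have himg : univ.filter (fun v : Fin N' => (e.symm v).1 = a)
      = (univ.filter (fun s : Σ a : Fin N, Fin (w a) => s.1 = a)).image e := by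
    ext v
    simp only [mem_filter, mem_univ, true_and, mem_image]
    constructor
    · intro h; exact ⟨e.symm v, h, e.apply_symm_apply v⟩
    · rintro ⟨s, hs, rfl⟩; simpa using hs
  rw [himg, Finset.card_image_of_injective _ e.injective]
  have hsig : univ.filter (fun s : Σ a : Fin N, Fin (w a) => s.1 = a)
      = ({a} : Finset (Fin N)).sigma (fun _ => univ) := by
    ext ⟨i, b⟩; simp [Finset.mem_sigma]
  rw [hsig, Finset.card_sigma]
  simp

theorem semiMax_weighting (k N k' N' : ℕ) (F : Finset (Finset (Fin N ⊕ Fin N)))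
    (hF : Semiintersecting k N F) (g : (Fin N ⊕ Fin N) → ℕ) (hg : ∀ x, 0 < g x)
    (hA : ∑ a : Fin N, g (Sum.inl a) = N') (hB : ∑ b : Fin N, g (Sum.inr b) = N')
    (hSA : ∀ S ∈ F, ∑ s ∈ sideA S, g s = k') (hSB : ∀ S ∈ F, ∑ s ∈ sideB S, g s = k') :
    F.card ≤ semiMax k' N' := by
  obtain ⟨pA, hpA⟩ := exists_fiber_card (fun a => g (Sum.inl a)) hA
  obtain ⟨pB, hpB⟩ := exists_fiber_card (fun b => g (Sum.inr b)) hB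
  set π : Fin N' ⊕ Fin N' → Fin N ⊕ Fin N := Sum.map pA pB with hπ
  have hfib : ∀ u : Fin N ⊕ Fin N, (univ.filter (fun x => π x = u)).card = g u := by
    rintro (a | b)
    · have h1 : univ.filter (fun x : Fin N' ⊕ Fin N' => π x = Sum.inl a)
          = (univ.filter (fun v : Fin N' => pA v = a)).image Sum.inl := by
        ext (v | v) <;> simp [hπ]
      rw [h1, card_image_of_injective _ Sum.inl_injective, hpA]
    · have h1 : univ.filter (fun x : Fin N' ⊕ Fin N' => π x = Sum.inr b)
          = (univ.filter (fun v : Fin N' => pB v = b)).image Sum.inr := by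
        ext (v | v) <;> simp [hπ]
      rw [h1, card_image_of_injective _ Sum.inr_injective, hpB]
  have hπsurj : Function.Surjective π := by
    intro u
    have hpos : (univ.filter (fun x => π x = u)).Nonempty := by
      rw [← Finset.card_pos, hfib u]; exact hg u
    obtain ⟨x, hx⟩ := hpos
    exact ⟨x, (mem_filter.mp hx).2⟩
  set blow : Finset (Fin N ⊕ Fin N) → Finset (Fin N' ⊕ Fin N') :=
    fun U => univ.filter (fun x => π x ∈ U) with hblow
  have hmem : ∀ U x, x ∈ blow U ↔ π x ∈ U := by intro U x; simp [hblow]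
  have hblow_inj : Function.Injective blow := by
    intro U V h
    ext u
    obtain ⟨x, rfl⟩ := hπsurj u
    rw [← hmem U x, ← hmem V x, h]
  have hempty : ∀ U, blow U = ∅ ↔ U = ∅ := by
    intro U
    constructor
    · intro h
      by_contra hne
      obtain ⟨u, hu⟩ := Finset.nonempty_iff_ne_empty.mpr hne
      obtain ⟨x, rfl⟩ := hπsurj u
      have : x ∈ blow U := (hmem U x).mpr hu
      simp [h] at this
    · intro h; rw [h]; ext x; simp [hmem]
  have hcard : ∀ U, (blow U).card = ∑ u ∈ U, g u := by
    intro U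
    rw [Finset.card_eq_sum_card_fiberwise (f := π) (t := U)
      (fun x hx => (hmem U x).mp hx)]
    refine Finset.sum_congr rfl fun u hu => ?_
    rw [← hfib u]
    congr 1
    ext x
    simp only [mem_filter, mem_univ, true_and, hmem]
    constructor
    · rintro ⟨_, h⟩; exact h
    · rintro rfl; exact ⟨hu, rfl⟩
  have hsideA : ∀ U, sideA (blow U) = blow (sideA U) := by
    intro U; ext (v | v) <;> simp [sideA, hblow, hπ]
  have hsideB : ∀ U, sideB (blow U) = blow (sideB U) := by
    intro U; ext (v | v) <;> simp [sideB, hblow, hπ]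
  have hinter : ∀ U V, blow U ∩ blow V = blow (U ∩ V) := by
    intro U V; ext x; simp [hblow]
  have hF' : Semiintersecting k' N' (F.image blow) := by
    constructor
    · intro S' hS'
      obtain ⟨S, hS, rfl⟩ := mem_image.mp hS'
      rw [hsideA, hsideB, hcard, hcard, hSA S hS, hSB S hS]
      exact ⟨rfl, rfl⟩
    · intro S' hS' T' hT' hne
      obtain ⟨S, hS, rfl⟩ := mem_image.mp hS'
      obtain ⟨T, hT, rfl⟩ := mem_image.mp hT'
      have hST : S ≠ T := fun h => hne (by rw [h])
      rw [hsideA, hsideA, hsideB, hsideB, hinter, hinter, hempty, ne_eq, hempty]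
      exact hF.2 S hS T hT hST
  have hmemset : F.card ∈ {n | ∃ F' : Finset (Finset (Fin N' ⊕ Fin N')),
      Semiintersecting k' N' F' ∧ F'.card = n} :=
    ⟨F.image blow, hF', Finset.card_image_of_injective F hblow_inj⟩
  exact le_csSup ⟨Fintype.card (Finset (Fin N' ⊕ Fin N')),
    fun n hn => by obtain ⟨G, _, rfl⟩ := hn; exact G.card_le_univ⟩ hmemset
end

section
/- If d divides both k and N, then f(k,N) ≥ f(k/d, N/d). -/
open Finset

private lemma semi_bdd (k N : ℕ) :
    BddAbove {n | ∃ F : Finset (Finset (Fin N ⊕ Fin N)), Semiintersecting k N F ∧ F.card = n} := by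
  refine ⟨Fintype.card (Finset (Fin N ⊕ Fin N)), ?_⟩
  rintro n ⟨F, -, rfl⟩
  simpa using Finset.card_le_univ F

theorem semiMax_div (k N d : ℕ) (hdk : d ∣ k) (hdN : d ∣ N) :
    semiMax (k / d) (N / d) ≤ semiMax k N := by
  rcases Nat.eq_zero_or_pos d with rfl | hd
  · obtain rfl := zero_dvd_iff.mp hdk
    obtain rfl := zero_dvd_iff.mp hdN
    simp
  set m := N / d with hm
  have hmd : m * d = N := Nat.div_mul_cancel hdN
  have hkd : (k / d) * d = k := Nat.div_mul_cancel hdk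
  -- the blow-up map on points
  set e : Fin m × Fin d → Fin N := fun p => finCongr hmd (finProdFinEquiv p) with he_def
  have he : Function.Injective e := by
    intro p q h
    exact finProdFinEquiv.injective ((finCongr hmd).injective h)
  set g : (Fin m ⊕ Fin m) × Fin d → Fin N ⊕ Fin N :=
    fun p => Sum.elim (fun i => (Sum.inl (e (i, p.2)) : Fin N ⊕ Fin N))
      (fun i => Sum.inr (e (i, p.2))) p.1 with hg_def
  have hg : Function.Injective g := by
    rintro ⟨a, j⟩ ⟨b, j'⟩ h
    rcases a with a | a <;> rcases b with b | b <;>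
      simp only [hg_def, Sum.elim_inl, Sum.elim_inr, Sum.inl.injEq, Sum.inr.injEq] at h
    · obtain ⟨h1, h2⟩ := Prod.mk.injEq _ _ _ _ ▸ he h
      simp [h1, h2]
    · exact absurd h (by simp)
    · exact absurd h (by simp)
    · obtain ⟨h1, h2⟩ := Prod.mk.injEq _ _ _ _ ▸ he h
      simp [h1, h2]
  -- the blow-up map on sets
  set Φ : Finset (Fin m ⊕ Fin m) → Finset (Fin N ⊕ Fin N) :=
    fun S => (S ×ˢ (univ : Finset (Fin d))).image g with hΦ_def
  have hgleft : ∀ p : (Fin m ⊕ Fin m) × Fin d, (g p).isLeft = p.1.isLeft := by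
    rintro ⟨a, j⟩; rcases a with a | a <;> simp [hg_def]
  have hgright : ∀ p : (Fin m ⊕ Fin m) × Fin d, (g p).isRight = p.1.isRight := by
    rintro ⟨a, j⟩; rcases a with a | a <;> simp [hg_def]
  have hA : ∀ S : Finset (Fin m ⊕ Fin m), sideA (Φ S) = (sideA S ×ˢ univ).image g := by
    intro S
    rw [hΦ_def, sideA, Finset.filter_image]
    congr 1
    ext ⟨a, j⟩
    simp [sideA, hgleft ⟨a, j⟩, and_comm, and_assoc]
  have hB : ∀ S : Finset (Fin m ⊕ Fin m), sideB (Φ S) = (sideB S ×ˢ univ).image g := by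
    intro S
    rw [hΦ_def, sideB, Finset.filter_image]
    congr 1
    ext ⟨a, j⟩
    simp [sideB, hgright ⟨a, j⟩, and_comm, and_assoc]
  have hcard : ∀ P : Finset (Fin m ⊕ Fin m), ((P ×ˢ (univ : Finset (Fin d))).image g).card
      = P.card * d := by
    intro P
    rw [Finset.card_image_of_injective _ hg, Finset.card_product, Finset.card_univ,
      Fintype.card_fin]
  have hinter : ∀ P Q : Finset (Fin m ⊕ Fin m),
      ((P ×ˢ (univ : Finset (Fin d))).image g ∩ (Q ×ˢ (univ : Finset (Fin d))).image g = ∅)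
        ↔ P ∩ Q = ∅ := by
    intro P Q
    rw [← Finset.image_inter _ _ hg, ← Finset.inter_product, Finset.image_eq_empty,
      Finset.product_eq_empty]
    have huniv : (univ : Finset (Fin d)) ≠ ∅ :=
      (Finset.univ_nonempty_iff.mpr (Fin.pos_iff_nonempty.mp hd)).ne_empty
    simp [huniv]
  have hΦinj : Function.Injective Φ := by
    intro S T h
    have h2 : S ×ˢ (univ : Finset (Fin d)) = T ×ˢ (univ : Finset (Fin d)) :=
      Finset.image_injective hg h
    ext a
    have j0 : Fin d := ⟨0, hd⟩
    constructor <;> intro ha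
    · have : (a, j0) ∈ S ×ˢ (univ : Finset (Fin d)) := by simp [ha]
      rw [h2] at this
      exact (Finset.mem_product.mp this).1
    · have : (a, j0) ∈ T ×ˢ (univ : Finset (Fin d)) := by simp [ha]
      rw [← h2] at this
      exact (Finset.mem_product.mp this).1
  -- now the main argument
  refine csSup_le ⟨0, ∅, ⟨fun S hS => absurd hS (Finset.notMem_empty S),
    fun S hS => absurd hS (Finset.notMem_empty S)⟩, rfl⟩ ?_
  rintro n ⟨F, ⟨hF1, hF2⟩, rfl⟩
  refine le_csSup (semi_bdd k N) ⟨F.image Φ, ⟨?_, ?_⟩, Finset.card_image_of_injective _ hΦinj⟩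
  · rintro S' hS'
    obtain ⟨S, hS, rfl⟩ := Finset.mem_image.mp hS'
    obtain ⟨h1, h2⟩ := hF1 S hS
    constructor
    · rw [hA, hcard, h1, hkd]
    · rw [hB, hcard, h2, hkd]
  · rintro S' hS' T' hT' hne
    obtain ⟨S, hS, rfl⟩ := Finset.mem_image.mp hS'
    obtain ⟨T, hT, rfl⟩ := Finset.mem_image.mp hT'
    have hST : S ≠ T := fun h => hne (by rw [h])
    rw [hA, hA, hB, hB, hinter, ne_eq, hinter]
    exact hF2 S hS T hT hST
end

section
/- If p is a prime power, then f(p, p²) ≥ p². -/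
open Finset

lemma semi_construction (p : ℕ) (K : Type) [Field K] [Fintype K]
    (hK : Fintype.card K = p) : p ^ 2 ≤ semiMax p (p ^ 2) := by
  classical
  have hcard : Fintype.card (K × K) = p ^ 2 := by
    simp [Fintype.card_prod, hK, sq]
  set N := p ^ 2 with hN
  let e : K × K ≃ Fin N := Fintype.equivFinOfCardEq hcard
  let L : K → K → Finset (Fin N ⊕ Fin N) :=
    fun s b => univ.image (fun x => Sum.inl (e (x, s * x + b)))
  let R : K → Finset (Fin N ⊕ Fin N) :=
    fun s => univ.image (fun y => Sum.inr (e (s, y)))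
  let S : K × K → Finset (Fin N ⊕ Fin N) := fun sb => L sb.1 sb.2 ∪ R sb.1
  have hA : ∀ s b : K, sideA (S (s, b)) = L s b := by
    intro s b
    ext z
    simp only [sideA, S, mem_filter, mem_union, L, R, mem_image, mem_univ, true_and]
    constructor
    · rintro ⟨h | ⟨y, rfl⟩, hl⟩
      · exact h
      · simp at hl
    · rintro ⟨x, rfl⟩; exact ⟨Or.inl ⟨x, rfl⟩, rfl⟩
  have hB : ∀ s b : K, sideB (S (s, b)) = R s := by
    intro s b
    ext z
    simp only [sideB, S, mem_filter, mem_union, L, R, mem_image, mem_univ, true_and]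
    constructor
    · rintro ⟨⟨x, rfl⟩ | h, hl⟩
      · simp at hl
      · exact h
    · rintro ⟨y, rfl⟩; exact ⟨Or.inr ⟨y, rfl⟩, rfl⟩
  have hcardL : ∀ s b : K, (L s b).card = p := by
    intro s b
    rw [Finset.card_image_of_injective _ (fun x y h => by
      simpa using congrArg Prod.fst (e.injective (Sum.inl_injective h)))]
    simp [hK]
  have hcardR : ∀ s : K, (R s).card = p := by
    intro s
    rw [Finset.card_image_of_injective _ (fun x y h => by
      simpa using congrArg Prod.snd (e.injective (Sum.inr_injective h)))]
    simp [hK]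
  -- parallel lines are disjoint
  have hLL : ∀ s b b' : K, b ≠ b' → L s b ∩ L s b' = ∅ := by
    intro s b b' hbb
    ext z
    simp only [mem_inter, L, mem_image, mem_univ, true_and, notMem_empty, iff_false, not_and]
    rintro ⟨x, rfl⟩ ⟨y, hy⟩
    have := e.injective (Sum.inl_injective hy)
    have hx : y = x := congrArg Prod.fst this
    have := congrArg Prod.snd this
    simp only [hx] at this
    exact hbb (add_left_cancel this).symm
  -- nonparallel lines meet
  have hLL' : ∀ s b s' b' : K, s ≠ s' → (L s b ∩ L s' b').Nonempty := by
    intro s b s' b' hss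
    have hs : s - s' ≠ 0 := sub_ne_zero.2 hss
    set x : K := (b' - b) / (s - s') with hx
    have hxx : s * x + b = s' * x + b' := by
      have h1 : (s - s') * x = b' - b := by
        rw [hx, mul_div_cancel₀ _ hs]
      have : s * x - s' * x = b' - b := by rw [← sub_mul]; exact h1
      linear_combination this
    refine ⟨Sum.inl (e (x, s * x + b)), ?_⟩
    simp only [mem_inter, L, mem_image, mem_univ, true_and]
    exact ⟨⟨x, rfl⟩, ⟨x, by rw [← hxx]⟩⟩
  have hRne : ∀ s : K, (R s).Nonempty :=
    fun s => ⟨Sum.inr (e (s, 0)), by simp [R]⟩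
  have hRR : ∀ s s' : K, s ≠ s' → R s ∩ R s' = ∅ := by
    intro s s' hss
    ext z
    simp only [mem_inter, R, mem_image, mem_univ, true_and, notMem_empty, iff_false, not_and]
    rintro ⟨x, rfl⟩ ⟨y, hy⟩
    exact hss (congrArg Prod.fst (e.injective (Sum.inr_injective hy))).symm
  have hSinj : Function.Injective S := by
    rintro ⟨s, b⟩ ⟨s', b'⟩ h
    have hBeq : R s = R s' := by
      have := congrArg sideB h
      rwa [hB s b, hB s' b'] at this
    have hs : s = s' := by
      by_contra hss
      have := hRR s s' hss
      rw [hBeq, inter_self] at this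
      exact (hRne s').ne_empty this
    subst hs
    have hAeq : L s b = L s b' := by
      have := congrArg sideA h
      rwa [hA s b, hA s b'] at this
    have hb : b = b' := by
      by_contra hbb
      have h1 := hLL s b b' hbb
      rw [hAeq, inter_self] at h1
      have h2 : (L s b').Nonempty := ⟨Sum.inl (e (0, s * 0 + b')), by simp [L]⟩
      exact h2.ne_empty h1
    simp [hb]
  let F : Finset (Finset (Fin N ⊕ Fin N)) := univ.image S
  have hF : Semiintersecting p N F := by
    constructor
    · intro T hT
      obtain ⟨⟨s, b⟩, _, rfl⟩ := mem_image.1 hT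
      rw [hA, hB]
      exact ⟨hcardL s b, hcardR s⟩
    · intro T hT T' hT' hne
      obtain ⟨⟨s, b⟩, _, rfl⟩ := mem_image.1 hT
      obtain ⟨⟨s', b'⟩, _, rfl⟩ := mem_image.1 hT'
      rw [hA, hA, hB, hB]
      by_cases hs : s = s'
      · subst hs
        have hb : b ≠ b' := fun h => hne (by rw [h])
        rw [hLL s b b' hb, inter_self]
        simpa using (hRne s).ne_empty
      · have h1 := hLL' s b s' b' hs
        have h2 := hRR s s' hs
        rw [h2]
        simp [h1.ne_empty]
  have hFcard : F.card = p ^ 2 := by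
    rw [Finset.card_image_of_injective _ hSinj, card_univ, hcard]
  have hbdd : BddAbove {n | ∃ F : Finset (Finset (Fin N ⊕ Fin N)),
      Semiintersecting p N F ∧ F.card = n} := by
    refine ⟨Fintype.card (Finset (Fin N ⊕ Fin N)), ?_⟩
    rintro n ⟨G, _, rfl⟩
    exact (Finset.card_le_univ G).trans_eq card_univ
  exact le_csSup hbdd ⟨F, hF, hFcard⟩

theorem semiMax_primePow_sq (p : ℕ) (hp : IsPrimePow p) :
    p ^ 2 ≤ semiMax p (p ^ 2) := by
  obtain ⟨q, n, hq, hn, rfl⟩ := hp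
  haveI := Fact.mk hq.nat_prime
  haveI : Fintype (GaloisField q n) := Fintype.ofFinite _
  have hc : Fintype.card (GaloisField q n) = q ^ n := by
    rw [← Nat.card_eq_fintype_card]; exact GaloisField.card q n hn.ne'
  exact semi_construction _ (GaloisField q n) hc
end

section
/- If p is a prime power, then f(p, p²) = p². -/
open Finset

lemma sideA_eq_image {N : ℕ} (S : Finset (Fin N ⊕ Fin N)) :
    sideA S = (univ.filter (fun a : Fin N => Sum.inl a ∈ S)).image Sum.inl := by
  ext x
  cases x <;> simp [sideA]

/-- Upper bound: any semiintersecting family with k = p, N = p² has at most p² members. -/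
lemma card_le_of_semi (p : ℕ) (hp : 0 < p)
    (F : Finset (Finset (Fin (p ^ 2) ⊕ Fin (p ^ 2))))
    (hF : Semiintersecting p (p ^ 2) F) : F.card ≤ p ^ 2 := by
  classical
  -- per-point bound: members through a fixed left point have pairwise disjoint B-sides
  have key : ∀ a : Fin (p ^ 2), (F.filter (fun S => Sum.inl a ∈ S)).card ≤ p := by
    intro a
    set G := F.filter (fun S => Sum.inl a ∈ S) with hG
    have hdisj : ∀ S ∈ G, ∀ T ∈ G, S ≠ T → Disjoint (sideB S) (sideB T) := by
      intro S hS T hT hne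
      rw [hG, Finset.mem_filter] at hS hT
      have hA : sideA S ∩ sideA T ≠ ∅ := by
        have hmem : Sum.inl a ∈ sideA S ∩ sideA T := by
          simp [sideA, Finset.mem_inter, Finset.mem_filter, hS.2, hT.2]
        intro h
        rw [h] at hmem
        exact absurd hmem (Finset.notMem_empty _)
      have hiff := hF.2 S hS.1 T hT.1 hne
      have hB : sideB S ∩ sideB T = ∅ := by
        by_contra hB
        exact hA (hiff.mpr hB)
      exact Finset.disjoint_iff_inter_eq_empty.mpr hB
    have hcardB : ∀ S ∈ G, (sideB S).card = p := by
      intro S hS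
      exact (hF.1 S (Finset.mem_filter.mp hS).1).2
    have h1 : (G.biUnion sideB).card = G.card * p := by
      rw [Finset.card_biUnion hdisj]
      rw [Finset.sum_congr rfl hcardB, Finset.sum_const, smul_eq_mul]
    have h2 : G.biUnion sideB ⊆ univ.filter (fun x => x.isRight) := by
      intro x hx
      rw [Finset.mem_biUnion] at hx
      obtain ⟨S, _, hxS⟩ := hx
      simp only [sideB, Finset.mem_filter] at hxS
      simp [hxS.2]
    have h3 : ((univ : Finset (Fin (p ^ 2) ⊕ Fin (p ^ 2))).filter (fun x => x.isRight)).card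
        = p ^ 2 := by
      have he : (univ : Finset (Fin (p ^ 2) ⊕ Fin (p ^ 2))).filter (fun x => x.isRight)
          = (univ : Finset (Fin (p ^ 2))).map ⟨Sum.inr, Sum.inr_injective⟩ := by
        ext x; cases x <;> simp
      rw [he, Finset.card_map, Finset.card_univ, Fintype.card_fin]
    have h4 : G.card * p ≤ p * p := by
      calc G.card * p = (G.biUnion sideB).card := h1.symm
        _ ≤ ((univ : Finset (Fin (p ^ 2) ⊕ Fin (p ^ 2))).filter (fun x => x.isRight)).card :=
            Finset.card_le_card h2
        _ = p ^ 2 := h3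
        _ = p * p := sq p
    exact Nat.le_of_mul_le_mul_right h4 hp
  -- double counting incidences
  have inc : ∑ a : Fin (p ^ 2), (F.filter (fun S => Sum.inl a ∈ S)).card
      = F.card * p := by
    have e1 : ∀ S ∈ F, ((univ : Finset (Fin (p ^ 2))).filter
        (fun a => Sum.inl a ∈ S)).card = p := by
      intro S hS
      have h := (hF.1 S hS).1
      rw [sideA_eq_image, Finset.card_image_of_injective _ Sum.inl_injective] at h
      exact h
    calc ∑ a : Fin (p ^ 2), (F.filter (fun S => Sum.inl a ∈ S)).card
        = ∑ S ∈ F, ((univ : Finset (Fin (p ^ 2))).filter (fun a => Sum.inl a ∈ S)).card := by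
          simp_rw [Finset.card_filter]
          exact Finset.sum_comm
      _ = ∑ S ∈ F, p := Finset.sum_congr rfl e1
      _ = F.card * p := by rw [Finset.sum_const, smul_eq_mul]
  have htot : F.card * p ≤ p ^ 2 * p := by
    calc F.card * p = ∑ a : Fin (p ^ 2), (F.filter (fun S => Sum.inl a ∈ S)).card := inc.symm
      _ ≤ ∑ _a : Fin (p ^ 2), p := Finset.sum_le_sum (fun a _ => key a)
      _ = p ^ 2 * p := by rw [Finset.sum_const, smul_eq_mul, Finset.card_univ, Fintype.card_fin]
  exact Nat.le_of_mul_le_mul_right htot hp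

/-- Lower bound: affine-plane-style construction over a field with `p` elements. -/
lemma semi_construction_s13 (K : Type) [Field K] [Fintype K] [DecidableEq K]
    (p : ℕ) (hp : 0 < p) (hcard : Fintype.card K = p) :
    ∃ F : Finset (Finset (Fin (p ^ 2) ⊕ Fin (p ^ 2))),
      Semiintersecting p (p ^ 2) F ∧ F.card = p ^ 2 := by
  classical
  have hcard2 : Fintype.card (K × K) = p ^ 2 := by
    rw [Fintype.card_prod, hcard]; ring
  let e : K × K ≃ Fin (p ^ 2) := Fintype.equivFinOfCardEq hcard2
  set L : K × K → Finset (Fin (p ^ 2) ⊕ Fin (p ^ 2)) := fun mc =>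
    (univ.image fun x : K => Sum.inl (e (x, mc.1 * x + mc.2))) ∪
    (univ.image fun y : K => Sum.inr (e (mc.1, y))) with hL
  have hsideA : ∀ mc : K × K,
      sideA (L mc) = univ.image fun x : K => Sum.inl (e (x, mc.1 * x + mc.2)) := by
    intro mc
    ext w
    cases w <;> simp [sideA, hL]
  have hsideB : ∀ mc : K × K,
      sideB (L mc) = univ.image fun y : K => Sum.inr (e (mc.1, y)) := by
    intro mc
    ext w
    cases w <;> simp [sideB, hL]
  have hcards : ∀ mc : K × K, (sideA (L mc)).card = p ∧ (sideB (L mc)).card = p := by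
    intro mc
    constructor
    · rw [hsideA]
      rw [Finset.card_image_of_injective _ (fun x x' h => by
        have h2 := e.injective (Sum.inl_injective h)
        simp only [Prod.mk.injEq] at h2
        exact h2.1)]
      rw [Finset.card_univ, hcard]
    · rw [hsideB]
      rw [Finset.card_image_of_injective _ (fun y y' h => by
        have h2 := e.injective (Sum.inr_injective h)
        simp only [Prod.mk.injEq] at h2
        exact h2.2)]
      rw [Finset.card_univ, hcard]
  -- intersection characterizations
  have interA : ∀ mc mc' : K × K,
      (sideA (L mc) ∩ sideA (L mc')).Nonempty ↔
        ∃ x : K, mc.1 * x + mc.2 = mc'.1 * x + mc'.2 := by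
    intro mc mc'
    constructor
    · rintro ⟨w, hw⟩
      rw [Finset.mem_inter, hsideA, hsideA] at hw
      obtain ⟨x, -, hx⟩ := Finset.mem_image.mp hw.1
      obtain ⟨x', -, hx'⟩ := Finset.mem_image.mp hw.2
      have hpair := e.injective (Sum.inl_injective (hx.trans hx'.symm))
      simp only [Prod.mk.injEq] at hpair
      obtain ⟨h1, h2⟩ := hpair
      subst h1
      exact ⟨x, h2⟩
    · rintro ⟨x, hx⟩
      refine ⟨Sum.inl (e (x, mc.1 * x + mc.2)), ?_⟩
      rw [Finset.mem_inter, hsideA, hsideA]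
      constructor
      · exact Finset.mem_image.mpr ⟨x, Finset.mem_univ x, rfl⟩
      · exact Finset.mem_image.mpr ⟨x, Finset.mem_univ x, by rw [← hx]⟩
  have interB : ∀ mc mc' : K × K,
      (sideB (L mc) ∩ sideB (L mc')).Nonempty ↔ mc.1 = mc'.1 := by
    intro mc mc'
    constructor
    · rintro ⟨w, hw⟩
      rw [Finset.mem_inter, hsideB, hsideB] at hw
      obtain ⟨y, -, hy⟩ := Finset.mem_image.mp hw.1
      obtain ⟨y', -, hy'⟩ := Finset.mem_image.mp hw.2
      have hpair := e.injective (Sum.inr_injective (hy.trans hy'.symm))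
      simp only [Prod.mk.injEq] at hpair
      exact hpair.1
    · intro h
      refine ⟨Sum.inr (e (mc.1, 0)), ?_⟩
      rw [Finset.mem_inter, hsideB, hsideB]
      exact ⟨Finset.mem_image.mpr ⟨0, Finset.mem_univ _, rfl⟩,
        Finset.mem_image.mpr ⟨0, Finset.mem_univ _, by rw [h]⟩⟩
  -- injectivity of L
  have hLinj : Function.Injective L := by
    intro mc mc' h
    have hm : mc.1 = mc'.1 := by
      have h1 : Sum.inr (e (mc.1, 0)) ∈ L mc := by
        rw [hL]
        exact Finset.mem_union_right _ (Finset.mem_image.mpr ⟨0, Finset.mem_univ _, rfl⟩)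
      rw [h, hL] at h1
      rcases Finset.mem_union.mp h1 with h2 | h2
      · obtain ⟨x, -, hx⟩ := Finset.mem_image.mp h2
        exact absurd hx (by simp)
      · obtain ⟨y, -, hy⟩ := Finset.mem_image.mp h2
        have hpair := e.injective (Sum.inr_injective hy)
        simp only [Prod.mk.injEq] at hpair
        exact hpair.1.symm
    have hc : mc.2 = mc'.2 := by
      have h1 : Sum.inl (e (0, mc.2)) ∈ L mc := by
        rw [hL]
        refine Finset.mem_union_left _ (Finset.mem_image.mpr ⟨0, Finset.mem_univ _, ?_⟩)
        rw [mul_zero, zero_add]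
      rw [h, hL] at h1
      rcases Finset.mem_union.mp h1 with h2 | h2
      · obtain ⟨x, -, hx⟩ := Finset.mem_image.mp h2
        have hpair := e.injective (Sum.inl_injective hx)
        simp only [Prod.mk.injEq] at hpair
        obtain ⟨hx0, hx2⟩ := hpair
        rw [hx0, mul_zero, zero_add] at hx2
        exact hx2.symm
      · obtain ⟨y, -, hy⟩ := Finset.mem_image.mp h2
        exact absurd hy (by simp)
    exact Prod.ext hm hc
  refine ⟨(univ : Finset (K × K)).image L, ⟨?_, ?_⟩, ?_⟩
  · rintro S hS
    obtain ⟨mc, -, rfl⟩ := Finset.mem_image.mp hS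
    exact hcards mc
  · rintro S hS T hT hne
    obtain ⟨mc, -, rfl⟩ := Finset.mem_image.mp hS
    obtain ⟨mc', -, rfl⟩ := Finset.mem_image.mp hT
    have hmc : mc ≠ mc' := fun hh => hne (hh ▸ rfl)
    rw [← Finset.not_nonempty_iff_eq_empty, ← Finset.nonempty_iff_ne_empty,
      interA, interB]
    by_cases hm : mc.1 = mc'.1
    · have hc : mc.2 ≠ mc'.2 := by
        intro hc
        exact hmc (Prod.ext hm hc)
      simp only [hm, iff_true]
      rintro ⟨x, hx⟩
      exact hc (add_left_cancel hx)
    · simp only [hm, iff_false, not_not]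
      refine ⟨(mc'.2 - mc.2) / (mc.1 - mc'.1), ?_⟩
      have hne' : mc.1 - mc'.1 ≠ 0 := sub_ne_zero.mpr hm
      field_simp
      ring
  · rw [Finset.card_image_of_injective _ hLinj, Finset.card_univ, hcard2]

theorem semiMax_primePow_sq_eq (p : ℕ) (hp : IsPrimePow p) :
    semiMax p (p ^ 2) = p ^ 2 := by
  classical
  obtain ⟨q, n, hq, hn, rfl⟩ := hp
  set p := q ^ n with hpdef
  haveI hq' : Fact (Nat.Prime q) := ⟨hq.nat_prime⟩
  have hp0 : 0 < p := pow_pos hq.nat_prime.pos n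
  letI : Fintype (GaloisField q n) := Fintype.ofFinite _
  letI : DecidableEq (GaloisField q n) := Classical.decEq _
  have hcard : Fintype.card (GaloisField q n) = p := by
    rw [← Nat.card_eq_fintype_card]
    exact GaloisField.card q n hn.ne'
  obtain ⟨F, hF, hFcard⟩ :=
    semi_construction_s13 (GaloisField q n) p hp0 hcard
  have hmem : (p ^ 2) ∈ {m | ∃ F : Finset (Finset (Fin (p ^ 2) ⊕ Fin (p ^ 2))),
      Semiintersecting p (p ^ 2) F ∧ F.card = m} := ⟨F, hF, hFcard⟩
  have hub : ∀ m ∈ {m | ∃ F : Finset (Finset (Fin (p ^ 2) ⊕ Fin (p ^ 2))),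
      Semiintersecting p (p ^ 2) F ∧ F.card = m}, m ≤ p ^ 2 := by
    rintro m ⟨G, hG, rfl⟩
    exact card_le_of_semi p hp0 G hG
  exact le_antisymm (csSup_le ⟨_, hmem⟩ hub) (le_csSup ⟨p ^ 2, hub⟩ hmem)
end

section
/- If p is a prime power and l ≤ p+1, then f(p, l·p²) ≥ l·p². -/
open Finset

section Construction

variable {K : Type*} [Field K] [Fintype K] [DecidableEq K]

/-- Two affine functions over a field agree somewhere iff they have different slopes or the
same intercept. -/
lemma affine_exists (s s' a a' : K) :
    (∃ x : K, s * x + a = s' * x + a') ↔ (s ≠ s' ∨ a = a') := by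
  constructor
  · rintro ⟨x, hx⟩
    by_cases h : s = s'
    · subst h
      exact Or.inr (add_left_cancel hx)
    · exact Or.inl h
  · rintro (h | h)
    · refine ⟨(a' - a) / (s - s'), ?_⟩
      have hs : s - s' ≠ 0 := sub_ne_zero.mpr h
      field_simp
      ring
    · exact ⟨0, by simp [h]⟩

/-- A line in the plane `K × K`, either with slope `s` (for `some s`) or vertical (`none`),
with "intercept" `a`, parametrized by `x`. -/
def lineB (s : Option K) (a : K) (x : K) : K × K :=
  match s with
  | some s => (x, s * x + a)
  | none => (a, x)

lemma lineB_injective (s : Option K) (a : K) : Function.Injective (lineB s a) := by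
  cases s with
  | none => intro x y h; simpa [lineB, Prod.ext_iff] using h
  | some s => intro x y h; simpa [lineB] using congrArg Prod.fst h

lemma lineB_exists (s s' : Option K) (a a' : K) :
    (∃ x x' : K, lineB s a x = lineB s' a' x') ↔ (s ≠ s' ∨ a = a') := by
  match s, s' with
  | some s, some s' =>
    constructor
    · rintro ⟨x, x', h⟩
      simp only [lineB, Prod.mk.injEq] at h
      obtain ⟨rfl, h⟩ := h
      rcases (affine_exists s s' a a').1 ⟨x, h⟩ with h | h
      · exact Or.inl (by simpa using h)
      · exact Or.inr h
    · intro h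
      have h' : s ≠ s' ∨ a = a' := by
        rcases h with h | h
        · exact Or.inl fun hc => h (by rw [hc])
        · exact Or.inr h
      obtain ⟨x, hx⟩ := (affine_exists s s' a a').2 h'
      exact ⟨x, x, by simp [lineB, hx]⟩
  | some s, none =>
    constructor
    · intro _
      exact Or.inl (by simp)
    · intro _
      exact ⟨a', s * a' + a, by simp [lineB]⟩
  | none, some s' =>
    constructor
    · intro _
      exact Or.inl (by simp)
    · intro _
      exact ⟨s' * a + a', a, by simp [lineB]⟩
  | none, none =>
    simp [lineB, Prod.ext_iff, eq_comm]

variable {l N : ℕ}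

/-- A member of the semiintersecting family: the `A`-side is the line `{(i, x, a·x+b)}` in
copy `i` of the affine plane, the `B`-side is the line with slope `σ i` and intercept `a`
(all living in copy `z`). -/
def mkS (e : Fin l × K × K ≃ Fin N) (σ : Fin l → Option K) (z : Fin l)
    (m : Fin l × K × K) : Finset (Fin N ⊕ Fin N) :=
  ((univ : Finset K).image fun x => Sum.inl (e (m.1, x, m.2.1 * x + m.2.2))) ∪
  ((univ : Finset K).image fun x => Sum.inr (e (z, lineB (σ m.1) m.2.1 x)))

lemma sideA_mkS (e : Fin l × K × K ≃ Fin N) (σ : Fin l → Option K) (z : Fin l)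
    (m : Fin l × K × K) :
    sideA (mkS e σ z m) =
      (univ : Finset K).image fun x => Sum.inl (e (m.1, x, m.2.1 * x + m.2.2)) := by
  ext w
  cases w <;> simp [sideA, mkS]

lemma sideB_mkS (e : Fin l × K × K ≃ Fin N) (σ : Fin l → Option K) (z : Fin l)
    (m : Fin l × K × K) :
    sideB (mkS e σ z m) =
      (univ : Finset K).image fun x => Sum.inr (e (z, lineB (σ m.1) m.2.1 x)) := by
  ext w
  cases w <;> simp [sideB, mkS]

lemma interA_mkS (e : Fin l × K × K ≃ Fin N) (σ : Fin l → Option K) (z : Fin l)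
    (m m' : Fin l × K × K) :
    (sideA (mkS e σ z m) ∩ sideA (mkS e σ z m')).Nonempty ↔
      (m.1 = m'.1 ∧ (m.2.1 ≠ m'.2.1 ∨ m.2.2 = m'.2.2)) := by
  rw [sideA_mkS, sideA_mkS]
  constructor
  · rintro ⟨w, hw⟩
    rw [mem_inter] at hw
    obtain ⟨hw1, hw2⟩ := hw
    simp only [mem_image, mem_univ, true_and] at hw1 hw2
    obtain ⟨x, hx⟩ := hw1
    obtain ⟨x', hx'⟩ := hw2
    rw [← hx'] at hx
    have h := e.injective (Sum.inl.inj hx)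
    simp only [Prod.mk.injEq] at h
    obtain ⟨h1, h2, h3⟩ := h
    refine ⟨h1, ?_⟩
    rw [← (affine_exists m.2.1 m'.2.1 m.2.2 m'.2.2)]
    exact ⟨x', by rw [h2] at h3; exact h3⟩
  · rintro ⟨h1, h2⟩
    obtain ⟨x, hx⟩ := (affine_exists m.2.1 m'.2.1 m.2.2 m'.2.2).2 h2
    refine ⟨Sum.inl (e (m.1, x, m.2.1 * x + m.2.2)), ?_⟩
    rw [mem_inter]
    constructor
    · simp only [mem_image, mem_univ, true_and]
      exact ⟨x, rfl⟩
    · simp only [mem_image, mem_univ, true_and]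
      exact ⟨x, by rw [← h1, ← hx]⟩
  
lemma interB_mkS (e : Fin l × K × K ≃ Fin N) (σ : Fin l → Option K) (z : Fin l)
    (m m' : Fin l × K × K) :
    (sideB (mkS e σ z m) ∩ sideB (mkS e σ z m')).Nonempty ↔
      (σ m.1 ≠ σ m'.1 ∨ m.2.1 = m'.2.1) := by
  rw [sideB_mkS, sideB_mkS]
  constructor
  · rintro ⟨w, hw⟩
    rw [mem_inter] at hw
    obtain ⟨hw1, hw2⟩ := hw
    simp only [mem_image, mem_univ, true_and] at hw1 hw2
    obtain ⟨x, hx⟩ := hw1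
    obtain ⟨x', hx'⟩ := hw2
    rw [← hx'] at hx
    have h := e.injective (Sum.inr.inj hx)
    simp only [Prod.mk.injEq] at h
    exact (lineB_exists _ _ _ _).1 ⟨x, x', h.2⟩
  · intro h
    obtain ⟨x, x', hx⟩ := (lineB_exists (σ m.1) (σ m'.1) m.2.1 m'.2.1).2 h
    refine ⟨Sum.inr (e (z, lineB (σ m.1) m.2.1 x)), ?_⟩
    rw [mem_inter]
    constructor
    · simp only [mem_image, mem_univ, true_and]
      exact ⟨x, rfl⟩
    · simp only [mem_image, mem_univ, true_and]
      exact ⟨x', by rw [hx]⟩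

lemma exists_semi (p : ℕ) (hK : Fintype.card K = p) (hl0 : 0 < l) (hl : l ≤ p + 1)
    (hN : N = l * p ^ 2) :
    ∃ F : Finset (Finset (Fin N ⊕ Fin N)), Semiintersecting p N F ∧ F.card = l * p ^ 2 := by
  have hcard : Fintype.card (Fin l × K × K) = N := by
    rw [Fintype.card_prod, Fintype.card_prod, Fintype.card_fin, hK, hN]
    ring
  have e : Fin l × K × K ≃ Fin N := Fintype.equivFinOfCardEq hcard
  have hσ : Nonempty (Fin l ↪ Option K) := by
    apply Function.Embedding.nonempty_of_card_le
    simpa [hK] using hl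
  obtain ⟨σ⟩ := hσ
  set z : Fin l := ⟨0, hl0⟩ with hz
  set S : Fin l × K × K → Finset (Fin N ⊕ Fin N) := mkS e (⇑σ) z with hS
  refine ⟨(univ : Finset (Fin l × K × K)).image S, ⟨?_, ?_⟩, ?_⟩
  · -- cards
    rintro T hT
    obtain ⟨m, -, rfl⟩ := mem_image.1 hT
    constructor
    · rw [hS, sideA_mkS]
      have hinj : Function.Injective
          (fun x : K => (Sum.inl (e (m.1, x, m.2.1 * x + m.2.2)) : Fin N ⊕ Fin N)) := by
        intro x y hxy
        have h := e.injective (Sum.inl.inj hxy)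
        simp only [Prod.mk.injEq] at h
        exact h.2.1
      rw [Finset.card_image_of_injective _ hinj, card_univ, hK]
    · rw [hS, sideB_mkS]
      have hinj : Function.Injective
          (fun x : K => (Sum.inr (e (z, lineB (σ m.1) m.2.1 x)) : Fin N ⊕ Fin N)) := by
        intro x y hxy
        have h := e.injective (Sum.inr.inj hxy)
        simp only [Prod.mk.injEq] at h
        exact lineB_injective _ _ h.2
      rw [Finset.card_image_of_injective _ hinj, card_univ, hK]
  · -- pairwise
    rintro T hT T' hT' hne
    obtain ⟨m, -, rfl⟩ := mem_image.1 hT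
    obtain ⟨m', -, rfl⟩ := mem_image.1 hT'
    have hmm : m ≠ m' := fun h => hne (by rw [h])
    rw [← not_nonempty_iff_eq_empty, ← nonempty_iff_ne_empty, hS,
      interA_mkS, interB_mkS]
    have hσi : σ m.1 = σ m'.1 ↔ m.1 = m'.1 := σ.injective.eq_iff
    have hm' : ¬(m.1 = m'.1 ∧ m.2.1 = m'.2.1 ∧ m.2.2 = m'.2.2) := by
      intro h
      exact hmm (Prod.ext h.1 (Prod.ext h.2.1 h.2.2))
    constructor
    · intro h
      by_cases h1 : m.1 = m'.1
      · right
        by_contra h2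
        exact h ⟨h1, Or.inl h2⟩
      · exact Or.inl fun hh => h1 (hσi.1 hh)
    · rintro (h | h) ⟨h1, h2⟩
      · exact h (hσi.2 h1)
      · rcases h2 with h2 | h2
        · exact h2 h
        · exact hm' ⟨h1, h, h2⟩
  · -- card of family
    have hSinj : Function.Injective S := by
      intro m m' h
      have hA : (sideA (S m) ∩ sideA (S m')).Nonempty := by
        rw [h, inter_self, hS, sideA_mkS]
        exact ⟨Sum.inl (e (m'.1, 0, m'.2.1 * 0 + m'.2.2)), mem_image.2 ⟨0, mem_univ _, rfl⟩⟩
      have hB : (sideB (S m) ∩ sideB (S m')).Nonempty := by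
        rw [h, inter_self, hS, sideB_mkS]
        exact ⟨Sum.inr (e (z, lineB (σ m'.1) m'.2.1 0)), mem_image.2 ⟨0, mem_univ _, rfl⟩⟩
      rw [hS, interA_mkS] at hA
      rw [hS, interB_mkS] at hB
      obtain ⟨h1, h2⟩ := hA
      have hσi : σ m.1 = σ m'.1 ↔ m.1 = m'.1 := σ.injective.eq_iff
      have h2' : m.2.1 = m'.2.1 := by
        rcases hB with hb | hb
        · exact absurd (hσi.2 h1) hb
        · exact hb
      have h3 : m.2.2 = m'.2.2 := by
        rcases h2 with h | h
        · exact absurd h2' h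
        · exact h
      exact Prod.ext h1 (Prod.ext h2' h3)
    rw [Finset.card_image_of_injective _ hSinj, card_univ, hcard, hN]

end Construction

theorem semiMax_primePow_l (p l : ℕ) (hp : IsPrimePow p) (hl : l ≤ p + 1) :
    l * p ^ 2 ≤ semiMax p (l * p ^ 2) := by
  rcases Nat.eq_zero_or_pos l with rfl | hl0
  · simp
  obtain ⟨q, n, hq, hn, hqn⟩ := hp
  haveI : Fact (Nat.Prime q) := ⟨Nat.prime_iff.2 hq⟩
  haveI : Fintype (GaloisField q n) := Fintype.ofFinite _
  haveI : DecidableEq (GaloisField q n) := Classical.decEq _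
  have hK : Fintype.card (GaloisField q n) = p := by
    rw [← Nat.card_eq_fintype_card, GaloisField.card q n hn.ne', hqn]
  obtain ⟨F, hF, hFcard⟩ := exists_semi (K := GaloisField q n) p hK hl0 hl rfl
  have hmem : l * p ^ 2 ∈
      {n | ∃ F : Finset (Finset (Fin (l * p ^ 2) ⊕ Fin (l * p ^ 2))),
        Semiintersecting p (l * p ^ 2) F ∧ F.card = n} := ⟨F, hF, hFcard⟩
  have hbdd : BddAbove {n | ∃ F : Finset (Finset (Fin (l * p ^ 2) ⊕ Fin (l * p ^ 2))),
      Semiintersecting p (l * p ^ 2) F ∧ F.card = n} := by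
    refine ⟨Fintype.card (Finset (Fin (l * p ^ 2) ⊕ Fin (l * p ^ 2))), ?_⟩
    rintro n ⟨F, -, rfl⟩
    simpa using Finset.card_le_univ F
  exact le_csSup hbdd hmem
end

section
/- If p is a prime power and N ≥ p³, then f(p,N) ≥ ⌊N/p⌋ − p² + p³. -/
open Finset

section Construction

variable {F : Type} [Field F] [Fintype F] [DecidableEq F] {N M : ℕ}

/-- Index type of the family: blocks, vertical-line sets, and affine-line sets. -/
abbrev SIdx (F : Type) [Monoid F] (M : ℕ) := Fin M ⊕ ((F × F) ⊕ (F × F × Fˣ))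

/-- The A-side part of each member, as a parametrized injection from `F`. -/
def aFun (φA : ((F × F × F) ⊕ (Fin M × F)) ↪ Fin N) : SIdx F M → F → Fin N
  | .inl i => fun x => φA (.inr (i, x))
  | .inr (.inl (m, a)) => fun x => φA (.inl (m, a, x))
  | .inr (.inr (m, c, d)) => fun x => φA (.inl (m, x, (d : F) * x + c))

/-- The B-side part of each member, as a parametrized injection from `F`. -/
def bFun (φB : (F × F) ↪ Fin N) : SIdx F M → F → Fin N
  | .inl _ => fun x => φB (0, x)
  | .inr (.inl (m, _)) => fun x => φB (x, m * x)
  | .inr (.inr (m, _, d)) => fun x => φB (x, m * x + (d : F))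

/-- A member of the family. -/
def memSet (φA : ((F × F × F) ⊕ (Fin M × F)) ↪ Fin N) (φB : (F × F) ↪ Fin N)
    (i : SIdx F M) : Finset (Fin N ⊕ Fin N) :=
  (univ.image fun x => Sum.inl (aFun φA i x)) ∪ (univ.image fun x => Sum.inr (bFun φB i x))

lemma aFun_injective (φA : ((F × F × F) ⊕ (Fin M × F)) ↪ Fin N) (i : SIdx F M) :
    Function.Injective (aFun φA i) := by
  rcases i with i | ⟨m, a⟩ | ⟨m, c, d⟩ <;> intro x y h <;>
    simp only [aFun, EmbeddingLike.apply_eq_iff_eq, Sum.inr.injEq, Sum.inl.injEq,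
      Prod.mk.injEq] at h
  · exact h.2
  · exact h.2.2
  · exact h.2.1

lemma bFun_injective (φB : (F × F) ↪ Fin N) (i : SIdx F M) :
    Function.Injective (bFun φB i) := by
  rcases i with i | ⟨m, a⟩ | ⟨m, c, d⟩ <;> intro x y h <;>
    simp only [bFun, EmbeddingLike.apply_eq_iff_eq, Prod.mk.injEq] at h
  · exact h.2
  · exact h.1
  · exact h.1

lemma sideA_memSet (φA : ((F × F × F) ⊕ (Fin M × F)) ↪ Fin N) (φB : (F × F) ↪ Fin N)
    (i : SIdx F M) :
    sideA (memSet φA φB i) = univ.image (fun x => Sum.inl (aFun φA i x)) := by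
  ext s
  simp only [sideA, memSet, mem_filter, mem_union, mem_image, mem_univ, true_and]
  constructor
  · rintro ⟨(⟨x, hx⟩ | ⟨x, hx⟩), hl⟩
    · exact ⟨x, hx⟩
    · subst hx; simp at hl
  · rintro ⟨x, hx⟩
    exact ⟨Or.inl ⟨x, hx⟩, by subst hx; rfl⟩

lemma sideB_memSet (φA : ((F × F × F) ⊕ (Fin M × F)) ↪ Fin N) (φB : (F × F) ↪ Fin N)
    (i : SIdx F M) :
    sideB (memSet φA φB i) = univ.image (fun x => Sum.inr (bFun φB i x)) := by
  ext s
  simp only [sideB, memSet, mem_filter, mem_union, mem_image, mem_univ, true_and]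
  constructor
  · rintro ⟨(⟨x, hx⟩ | ⟨x, hx⟩), hl⟩
    · subst hx; simp at hl
    · exact ⟨x, hx⟩
  · rintro ⟨x, hx⟩
    exact ⟨Or.inr ⟨x, hx⟩, by subst hx; rfl⟩

lemma interA_nonempty_iff (φA : ((F × F × F) ⊕ (Fin M × F)) ↪ Fin N) (φB : (F × F) ↪ Fin N)
    (i j : SIdx F M) :
    (sideA (memSet φA φB i) ∩ sideA (memSet φA φB j)).Nonempty ↔
      ∃ x y, aFun φA i x = aFun φA j y := by
  rw [sideA_memSet, sideA_memSet]
  constructor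
  · rintro ⟨s, hs⟩
    rw [mem_inter] at hs
    obtain ⟨h1, h2⟩ := hs
    simp only [mem_image, mem_univ, true_and] at h1 h2
    obtain ⟨x, hx⟩ := h1
    obtain ⟨y, hy⟩ := h2
    exact ⟨x, y, Sum.inl_injective (hx.trans hy.symm)⟩
  · rintro ⟨x, y, h⟩
    refine ⟨Sum.inl (aFun φA i x), ?_⟩
    rw [mem_inter]
    constructor
    · exact mem_image.mpr ⟨x, mem_univ x, rfl⟩
    · exact mem_image.mpr ⟨y, mem_univ y, by rw [h]⟩

lemma interB_nonempty_iff (φA : ((F × F × F) ⊕ (Fin M × F)) ↪ Fin N) (φB : (F × F) ↪ Fin N)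
    (i j : SIdx F M) :
    (sideB (memSet φA φB i) ∩ sideB (memSet φA φB j)).Nonempty ↔
      ∃ x y, bFun φB i x = bFun φB j y := by
  rw [sideB_memSet, sideB_memSet]
  constructor
  · rintro ⟨s, hs⟩
    rw [mem_inter] at hs
    obtain ⟨h1, h2⟩ := hs
    simp only [mem_image, mem_univ, true_and] at h1 h2
    obtain ⟨x, hx⟩ := h1
    obtain ⟨y, hy⟩ := h2
    exact ⟨x, y, Sum.inr_injective (hx.trans hy.symm)⟩
  · rintro ⟨x, y, h⟩
    refine ⟨Sum.inr (bFun φB i x), ?_⟩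
    rw [mem_inter]
    constructor
    · exact mem_image.mpr ⟨x, mem_univ x, rfl⟩
    · exact mem_image.mpr ⟨y, mem_univ y, by rw [h]⟩

lemma line_meet {s s' c c' : F} (h : s ≠ s') : ∃ x : F, s * x + c = s' * x + c' := by
  have hs : s - s' ≠ 0 := sub_ne_zero.mpr h
  refine ⟨(c' - c) / (s - s'), ?_⟩
  field_simp
  ring

/-- The key combinatorial dichotomy for pairs of distinct members. -/
lemma pair_dichotomy (φA : ((F × F × F) ⊕ (Fin M × F)) ↪ Fin N) (φB : (F × F) ↪ Fin N)
    (i j : SIdx F M) (hij : i ≠ j) :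
    ((∃ x y, aFun φA i x = aFun φA j y) ∧ ¬(∃ x y, bFun φB i x = bFun φB j y)) ∨
    (¬(∃ x y, aFun φA i x = aFun φA j y) ∧ (∃ x y, bFun φB i x = bFun φB j y)) := by
  rcases i with i | ⟨m, a⟩ | ⟨m, c, d⟩ <;> rcases j with j | ⟨m', a'⟩ | ⟨m', c', d'⟩ <;>
    simp only [aFun, bFun, EmbeddingLike.apply_eq_iff_eq, Sum.inr.injEq, Sum.inl.injEq,
      Prod.mk.injEq, reduceCtorEq, and_false, false_and, exists_const, exists_false, not_false_iff,
      and_true, true_and, or_false, false_or, not_exists] at *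
  -- blk vs blk
  · exact Or.inr ⟨fun x y h => hij (by rw [h.1]), 0, 0, rfl⟩
  -- blk vs U
  · exact ⟨m' * 0, 0, rfl, rfl⟩
  -- blk vs S
  · exact ⟨m' * 0 + (d' : F), 0, rfl, rfl⟩
  -- U vs blk
  · exact ⟨0, m * 0, rfl, rfl⟩
  -- U vs U
  · exact Or.inr ⟨fun x y h => hij (by rw [h.1, h.2.1]), 0, 0, rfl, by rw [mul_zero, mul_zero]⟩
  -- U vs S
  · by_cases hm : m = m'
    · subst hm
      refine Or.inl ⟨⟨(d' : F) * a + c', a, rfl, rfl, rfl⟩, ?_⟩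
      rintro x y ⟨rfl, h⟩
      exact d'.ne_zero (left_eq_add.mp h)
    · refine Or.inr ⟨fun x y h => hm h.1, ?_⟩
      obtain ⟨x, hx⟩ := line_meet (s := m) (s' := m') (c := 0) (c' := (d' : F)) hm
      exact ⟨x, x, rfl, by linear_combination hx⟩
  -- S vs blk
  · exact ⟨0, m * 0 + (d : F), rfl, rfl⟩
  -- S vs U
  · by_cases hm : m = m'
    · subst hm
      refine Or.inl ⟨⟨a', (d : F) * a' + c, rfl, rfl, rfl⟩, ?_⟩
      rintro x y ⟨rfl, h⟩
      exact d.ne_zero (add_eq_left.mp h)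
    · refine Or.inr ⟨fun x y h => hm h.1, ?_⟩
      obtain ⟨x, hx⟩ := line_meet (s := m) (s' := m') (c := (d : F)) (c' := 0) hm
      exact ⟨x, x, rfl, by linear_combination hx⟩
  -- S vs S
  · by_cases hm : m = m'
    · subst hm
      by_cases hd : (d : F) = (d' : F)
      · have hc : c ≠ c' := by
          intro hc
          exact hij (by rw [hc, Units.ext hd])
        refine Or.inr ⟨?_, 0, 0, rfl, by rw [hd]⟩
        rintro x y ⟨-, rfl, h⟩
        rw [hd] at h
        exact hc (add_left_cancel h)
      · refine Or.inl ⟨?_, ?_⟩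
        · obtain ⟨x, hx⟩ := line_meet (s := (d : F)) (s' := (d' : F)) (c := c) (c' := c') hd
          exact ⟨x, x, rfl, rfl, hx⟩
        · rintro x y ⟨rfl, h⟩
          exact hd (add_left_cancel h)
    · refine Or.inr ⟨fun x y h => hm h.1, ?_⟩
      obtain ⟨x, hx⟩ := line_meet (s := m) (s' := m') (c := (d : F)) (c' := (d' : F)) hm
      exact ⟨x, x, rfl, hx⟩

lemma memSet_injective (φA : ((F × F × F) ⊕ (Fin M × F)) ↪ Fin N) (φB : (F × F) ↪ Fin N) :
    Function.Injective (memSet (F := F) (M := M) φA φB) := by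
  intro i j h
  by_contra hij
  rcases pair_dichotomy φA φB i j hij with ⟨hA, hB⟩ | ⟨hA, hB⟩
  · apply hB
    rw [← interB_nonempty_iff φA φB i j]
    rw [h, inter_self]
    rw [sideB_memSet]
    exact ⟨Sum.inr (bFun φB j 0), mem_image.mpr ⟨0, mem_univ 0, rfl⟩⟩
  · apply hA
    rw [← interA_nonempty_iff φA φB i j]
    rw [h, inter_self]
    rw [sideA_memSet]
    exact ⟨Sum.inl (aFun φA j 0), mem_image.mpr ⟨0, mem_univ 0, rfl⟩⟩

lemma semiintersecting_family (φA : ((F × F × F) ⊕ (Fin M × F)) ↪ Fin N)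
    (φB : (F × F) ↪ Fin N) :
    Semiintersecting (Fintype.card F) N (univ.image (memSet (F := F) (M := M) φA φB)) := by
  constructor
  · intro S hS
    obtain ⟨i, -, rfl⟩ := mem_image.mp hS
    constructor
    · rw [sideA_memSet, card_image_of_injective univ
        (show Function.Injective fun x => Sum.inl (aFun φA i x) from
          fun x y h => aFun_injective φA i (Sum.inl_injective h)), card_univ]
    · rw [sideB_memSet, card_image_of_injective univ
        (show Function.Injective fun x => Sum.inr (bFun φB i x) from
          fun x y h => bFun_injective φB i (Sum.inr_injective h)), card_univ]
  · intro S hS T hT hST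
    obtain ⟨i, -, rfl⟩ := mem_image.mp hS
    obtain ⟨j, -, rfl⟩ := mem_image.mp hT
    have hij : i ≠ j := fun h => hST (by rw [h])
    rw [← Finset.not_nonempty_iff_eq_empty, ← Finset.nonempty_iff_ne_empty,
      interA_nonempty_iff, interB_nonempty_iff]
    rcases pair_dichotomy φA φB i j hij with ⟨hA, hB⟩ | ⟨hA, hB⟩
    · constructor
      · intro h; exact absurd hA h
      · intro h; exact absurd h hB
    · constructor
      · intro _; exact hB
      · intro _; exact hA

end Construction

theorem semiMax_bigN_primePow (p N : ℕ) (hp : IsPrimePow p) (hN : p ^ 3 ≤ N) :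
    N / p - p ^ 2 + p ^ 3 ≤ semiMax p N := by
  classical
  obtain ⟨r, k, hr, hk, rfl⟩ := hp
  haveI : Fact r.Prime := ⟨Nat.prime_iff.mpr hr⟩
  set q := r ^ k with hq
  let F := GaloisField r k
  haveI : Fintype F := Fintype.ofFinite F
  haveI : DecidableEq F := Classical.decEq F
  have hcard : Fintype.card F = q := by
    rw [← Nat.card_eq_fintype_card]
    exact GaloisField.card r k (by omega)
  have hq2 : 2 ≤ q := Nat.one_lt_pow (by omega) (Nat.prime_iff.mpr hr).two_le
  have hq0 : 0 < q := by omega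
  have hdiv : q ^ 2 ≤ N / q := by
    rw [Nat.le_div_iff_mul_le hq0, ← pow_succ]
    exact hN
  set M := N / q - q ^ 2 with hM
  -- the A-side embedding
  have hcardA : Fintype.card ((F × F × F) ⊕ (Fin M × F)) ≤ Fintype.card (Fin N) := by
    have h1 : N / q * q ≤ N := Nat.div_mul_le_self N q
    have h2 : q ^ 2 * q ≤ N / q * q := Nat.mul_le_mul_right q hdiv
    have h3 : q ^ 2 * q = q ^ 3 := by ring
    have h4 : M * q + q ^ 2 * q = N / q * q := by
      rw [hM, Nat.sub_mul]
      exact Nat.sub_add_cancel h2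
    have h5 : q * (q * q) = q ^ 3 := by ring
    simp only [Fintype.card_sum, Fintype.card_prod, Fintype.card_fin, hcard]
    linarith
  obtain ⟨φA⟩ := Function.Embedding.nonempty_of_card_le hcardA
  have hcardB : Fintype.card (F × F) ≤ Fintype.card (Fin N) := by
    have h3 : q * q ≤ q ^ 3 := by nlinarith
    simp only [Fintype.card_prod, Fintype.card_fin, hcard]
    linarith
  obtain ⟨φB⟩ := Function.Embedding.nonempty_of_card_le hcardB
  have hsemi := semiintersecting_family φA φB
  rw [hcard] at hsemi
  have hcardFam : (univ.image (memSet (F := F) (M := M) φA φB)).card = N / q - q ^ 2 + q ^ 3 := by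
    rw [card_image_of_injective univ (memSet_injective φA φB), card_univ]
    have hcube : q * q + q * (q * (q - 1)) = q ^ 3 := by
      obtain ⟨t, ht⟩ : ∃ t, q = t + 1 := ⟨q - 1, by omega⟩
      rw [ht]
      simp only [Nat.add_sub_cancel]
      ring
    have hu : Fintype.card Fˣ = q - 1 := by
      rw [← hcard]; convert Fintype.card_units (α := F)
    simp only [Fintype.card_sum, Fintype.card_prod, Fintype.card_fin, Fintype.card_units, hcard, hu]
    omega
  unfold semiMax
  apply le_csSup
  · refine ⟨Fintype.card (Finset (Fin N ⊕ Fin N)), ?_⟩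
    rintro n ⟨G, -, rfl⟩
    exact Finset.card_le_univ G
  · exact ⟨univ.image (memSet (F := F) (M := M) φA φB), hsemi, hcardFam⟩
end

section
/- For every positive integer k and every prime power p with p ≤ k, f(k, pk) ≥ p². -/
open Finset

section Construction

variable {K : Type} [Field K] [Fintype K] {k N : ℕ}

/-- Pad positions: indices of `Fin k` not hit by the embedding `ι`. -/
def padSet (ι : K ↪ Fin k) : Finset (Fin k) := univ \ univ.map ι

/-- The `A`-side part: the full row `{a} × Fin k`. -/
def LA (e : K × Fin k ≃ Fin N) (a : K) : Finset (Fin N) :=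
  univ.image (fun i : Fin k => e (a, i))

/-- The `B`-side part: the line of slope `a` and intercept `b`, padded with column `b`. -/
def LB (e : K × Fin k ≃ Fin N) (ι : K ↪ Fin k) (a b : K) : Finset (Fin N) :=
  (univ.image fun x : K => e (a * x + b, ι x)) ∪ ((padSet ι).image fun j => e (b, j))

def inlEmb {N : ℕ} : Fin N ↪ (Fin N ⊕ Fin N) := ⟨Sum.inl, Sum.inl_injective⟩
def inrEmb {N : ℕ} : Fin N ↪ (Fin N ⊕ Fin N) := ⟨Sum.inr, Sum.inr_injective⟩

def mySet (e : K × Fin k ≃ Fin N) (ι : K ↪ Fin k) (a b : K) : Finset (Fin N ⊕ Fin N) :=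
  (LA e a).map inlEmb ∪ (LB e ι a b).map inrEmb

lemma sideA_union (X Y : Finset (Fin N)) :
    sideA (X.map inlEmb ∪ Y.map inrEmb) = X.map inlEmb := by
  ext x
  cases x <;> simp [sideA, inlEmb, inrEmb]

lemma sideB_union (X Y : Finset (Fin N)) :
    sideB (X.map inlEmb ∪ Y.map inrEmb) = Y.map inrEmb := by
  ext x
  cases x <;> simp [sideB, inlEmb, inrEmb]

lemma sideA_mySet (e : K × Fin k ≃ Fin N) (ι : K ↪ Fin k) (a b : K) :
    sideA (mySet e ι a b) = (LA e a).map inlEmb := sideA_union _ _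

lemma sideB_mySet (e : K × Fin k ≃ Fin N) (ι : K ↪ Fin k) (a b : K) :
    sideB (mySet e ι a b) = (LB e ι a b).map inrEmb := sideB_union _ _

lemma card_LA (e : K × Fin k ≃ Fin N) (a : K) : (LA e a).card = k := by
  rw [LA, Finset.card_image_of_injective _ (fun i j h => by
    simpa using (Prod.mk.injEq _ _ _ _ ▸ e.injective h).2)]
  simp

lemma line_pad_disjoint (e : K × Fin k ≃ Fin N) (ι : K ↪ Fin k) (a b c : K) :
    Disjoint (univ.image fun x : K => e (a * x + b, ι x))
      ((padSet ι).image fun j => e (c, j)) := by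
  rw [Finset.disjoint_left]
  rintro z hz hz'
  simp only [mem_image, mem_univ, true_and] at hz hz'
  obtain ⟨x, hx⟩ := hz
  obtain ⟨j, hj, hjx⟩ := hz'
  have : (a * x + b, ι x) = (c, j) := e.injective (hx.trans hjx.symm)
  have hij : ι x = j := congrArg Prod.snd this
  simp [padSet] at hj
  exact hj x hij

lemma card_LB (e : K × Fin k ≃ Fin N) (ι : K ↪ Fin k) (a b : K)
    (hcard : Fintype.card K ≤ k) : (LB e ι a b).card = k := by
  rw [LB, Finset.card_union_of_disjoint (line_pad_disjoint e ι a b b)]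
  have h1 : (univ.image fun x : K => e (a * x + b, ι x)).card = Fintype.card K := by
    rw [Finset.card_image_of_injective _ (fun x y h => by
      have := e.injective h
      exact ι.injective (congrArg Prod.snd this))]
    simp
  have h2 : ((padSet ι).image fun j => e (b, j)).card = k - Fintype.card K := by
    rw [Finset.card_image_of_injective _ (fun i j h => by
      simpa using (Prod.mk.injEq _ _ _ _ ▸ e.injective h).2)]
    rw [padSet, Finset.card_sdiff_of_subset (Finset.subset_univ _)]
    simp
  rw [h1, h2, Nat.add_sub_cancel' hcard]

lemma LA_nonempty (e : K × Fin k ≃ Fin N) (a : K) (hk : 0 < k) : (LA e a).Nonempty := by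
  exact ⟨e (a, ⟨0, hk⟩), Finset.mem_image.2 ⟨⟨0, hk⟩, Finset.mem_univ _, rfl⟩⟩

lemma LB_nonempty (e : K × Fin k ≃ Fin N) (ι : K ↪ Fin k) (a b : K) :
    (LB e ι a b).Nonempty := by
  exact Finset.Nonempty.mono Finset.subset_union_left
    ⟨e (a * 0 + b, ι 0), Finset.mem_image.2 ⟨0, Finset.mem_univ _, rfl⟩⟩

lemma LA_disjoint (e : K × Fin k ≃ Fin N) {a a' : K} (h : a ≠ a') :
    LA e a ∩ LA e a' = ∅ := by
  rw [Finset.eq_empty_iff_forall_notMem]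
  intro z hz
  rw [Finset.mem_inter] at hz
  obtain ⟨hz1, hz2⟩ := hz
  simp only [LA, mem_image, mem_univ, true_and] at hz1 hz2
  obtain ⟨i, hi⟩ := hz1
  obtain ⟨j, hj⟩ := hz2
  exact h (congrArg Prod.fst (e.injective (hi.trans hj.symm)))

lemma LB_disjoint (e : K × Fin k ≃ Fin N) (ι : K ↪ Fin k) (a : K) {b b' : K} (h : b ≠ b') :
    LB e ι a b ∩ LB e ι a b' = ∅ := by
  rw [Finset.eq_empty_iff_forall_notMem]
  intro z hz
  rw [Finset.mem_inter] at hz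
  obtain ⟨hz1, hz2⟩ := hz
  rw [LB, Finset.mem_union] at hz1 hz2
  rcases hz1 with hz1 | hz1 <;> rcases hz2 with hz2 | hz2
  · simp only [mem_image, mem_univ, true_and] at hz1 hz2
    obtain ⟨x, hx⟩ := hz1
    obtain ⟨y, hy⟩ := hz2
    have hp := e.injective (hx.trans hy.symm)
    have hxy : x = y := ι.injective (congrArg Prod.snd hp)
    have := congrArg Prod.fst hp
    subst hxy
    simp only at this
    exact h (by linear_combination this)
  · exact (Finset.disjoint_left.1 (line_pad_disjoint e ι a b b')) hz1 hz2
  · exact (Finset.disjoint_left.1 (line_pad_disjoint e ι a b' b)) hz2 hz1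
  · simp only [mem_image] at hz1 hz2
    obtain ⟨i, _, hi⟩ := hz1
    obtain ⟨j, _, hj⟩ := hz2
    exact h (congrArg Prod.fst (e.injective (hi.trans hj.symm)))

lemma LB_meet (e : K × Fin k ≃ Fin N) (ι : K ↪ Fin k) {a a' : K} (b b' : K) (h : a ≠ a') :
    (LB e ι a b ∩ LB e ι a' b').Nonempty := by
  have hne : a - a' ≠ 0 := sub_ne_zero.2 h
  set x₀ : K := (b' - b) / (a - a') with hx₀
  have key : a * x₀ + b = a' * x₀ + b' := by
    rw [hx₀]
    field_simp
    ring
  refine ⟨e (a * x₀ + b, ι x₀), Finset.mem_inter.2 ⟨?_, ?_⟩⟩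
  · exact Finset.mem_union_left _ (Finset.mem_image.2 ⟨x₀, Finset.mem_univ _, rfl⟩)
  · rw [key]
    exact Finset.mem_union_left _ (Finset.mem_image.2 ⟨x₀, Finset.mem_univ _, rfl⟩)

lemma mySet_inj (e : K × Fin k ≃ Fin N) (ι : K ↪ Fin k) (hk : 0 < k) :
    Function.Injective (fun ab : K × K => mySet e ι ab.1 ab.2) := by
  rintro ⟨a, b⟩ ⟨a', b'⟩ h
  simp only at h
  have hA : LA e a = LA e a' := by
    have := congrArg sideA h
    rw [sideA_mySet, sideA_mySet] at this
    exact Finset.map_injective _ this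
  have hB : LB e ι a b = LB e ι a' b' := by
    have := congrArg sideB h
    rw [sideB_mySet, sideB_mySet] at this
    exact Finset.map_injective _ this
  have haa : a = a' := by
    by_contra hne
    have := LA_disjoint e hne
    rw [hA, Finset.inter_self] at this
    exact (LA_nonempty e a' hk).ne_empty this
  subst haa
  have hbb : b = b' := by
    by_contra hne
    have := LB_disjoint e ι a hne
    rw [hB, Finset.inter_self] at this
    exact (LB_nonempty e ι a b').ne_empty this
  rw [hbb]

end Construction

theorem semiMax_pk (k p : ℕ) (hk : 0 < k) (hp : IsPrimePow p) (hpk : p ≤ k) :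
    p ^ 2 ≤ semiMax k (p * k) := by
  classical
  obtain ⟨q, n, hq, hn, rfl⟩ := hp
  haveI : Fact (Nat.Prime q) := ⟨Nat.prime_iff.2 hq⟩
  set K := GaloisField q n with hKdef
  haveI : Fintype K := Fintype.ofFinite K
  have hK : Fintype.card K = q ^ n := by
    rw [← Nat.card_eq_fintype_card]
    exact GaloisField.card q n hn.ne'
  have hcard : Fintype.card K ≤ k := hK ▸ hpk
  have hek : Fintype.card (K × Fin k) = q ^ n * k := by simp [hK]
  let e : K × Fin k ≃ Fin (q ^ n * k) := Fintype.equivFinOfCardEq hek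
  obtain ⟨ι⟩ : Nonempty (K ↪ Fin k) :=
    Function.Embedding.nonempty_of_card_le (by simpa [hK] using hpk)
  set F : Finset (Finset (Fin (q ^ n * k) ⊕ Fin (q ^ n * k))) :=
    (univ : Finset (K × K)).image (fun ab => mySet e ι ab.1 ab.2) with hF
  have hsemi : Semiintersecting k (q ^ n * k) F := by
    constructor
    · intro S hS
      obtain ⟨⟨a, b⟩, _, rfl⟩ := Finset.mem_image.1 hS
      constructor
      · rw [sideA_mySet, Finset.card_map, card_LA]
      · rw [sideB_mySet, Finset.card_map, card_LB e ι a b hcard]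
    · intro S hS T hT hST
      obtain ⟨⟨a, b⟩, _, rfl⟩ := Finset.mem_image.1 hS
      obtain ⟨⟨a', b'⟩, _, rfl⟩ := Finset.mem_image.1 hT
      rw [sideA_mySet, sideA_mySet, sideB_mySet, sideB_mySet,
        ← Finset.map_inter, ← Finset.map_inter]
      by_cases haa : a = a'
      · subst haa
        have hbb : b ≠ b' := by
          rintro rfl; exact hST rfl
        rw [LB_disjoint e ι a hbb]
        simp only [Finset.map_empty, ne_eq, not_true_eq_false, iff_false]
        rw [Finset.inter_self]
        intro hcon
        rw [Finset.map_eq_empty] at hcon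
        exact (LA_nonempty e a hk).ne_empty hcon
      · rw [LA_disjoint e haa]
        simp only [Finset.map_empty, true_iff, ne_eq, Finset.map_eq_empty]
        exact (LB_meet e ι b b' haa).ne_empty
  have hcardF : F.card = (q ^ n) ^ 2 := by
    rw [hF, Finset.card_image_of_injective _ (mySet_inj e ι hk), Finset.card_univ]
    simp [hK, sq]
  apply le_csSup
  · refine ⟨Fintype.card (Finset (Fin (q ^ n * k) ⊕ Fin (q ^ n * k))), ?_⟩
    rintro m ⟨G, _, rfl⟩
    exact Finset.card_le_univ G
  · exact ⟨F, hsemi, hcardF⟩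
end
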